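/- Let S ⊆ {1,…,p} be a nonempty index set with s := |S|, let L > 0 and M > 0, and suppose the weights satisfy min_{j∉S} w_j ≥ M/L and ‖w_S‖_2 ≤ M√s. Let φ > 0 satisfy ‖Xγ‖_n ≥ φ‖γ_S‖_2 for every γ ∈ ℝ^p with ‖γ_{S^c}‖_1 ≤ 2L√s·‖γ_S‖_2 (a (2L,S)-restricted eigenvalue lower bound). Then any weighted Lasso solution β_weight satisfies, for every β ∈ ℝ^p: ‖Xβ_weight − f⁰‖_n² ≤ 2‖Xβ_S − f⁰‖_n² + 6·λ_init²·λ_weight²·M²·s/φ². -/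

import Mathlib

open Finset

private lemma sqrt_sum_sub_le (n : ℕ) (a b : Fin n → ℝ) :
    Real.sqrt ((∑ i, (a i - b i)^2)/n) ≤ Real.sqrt ((∑ i, a i ^2)/n) + Real.sqrt ((∑ i, b i ^2)/n) := by
  have ha : ∀ v : Fin n → ℝ, ‖(WithLp.equiv 2 (Fin n → ℝ)).symm v‖ = Real.sqrt (∑ i, v i ^ 2) := by
    intro v
    rw [EuclideanSpace.norm_eq]
    congr 1
    refine Finset.sum_congr rfl fun i _ => ?_
    rw [Real.norm_eq_abs, sq_abs]
    rfl
  have hA : Real.sqrt (∑ i, (a i - b i)^2) ≤ Real.sqrt (∑ i, a i ^2) + Real.sqrt (∑ i, b i ^2) := by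
    have := norm_sub_le ((WithLp.equiv 2 (Fin n → ℝ)).symm a) ((WithLp.equiv 2 (Fin n → ℝ)).symm b)
    rw [ha a, ha b] at this
    have h2 : (WithLp.equiv 2 (Fin n → ℝ)).symm a - (WithLp.equiv 2 (Fin n → ℝ)).symm b
        = (WithLp.equiv 2 (Fin n → ℝ)).symm (fun i => a i - b i) := rfl
    rw [h2, ha] at this
    exact this
  rw [Real.sqrt_div (by positivity), Real.sqrt_div (by positivity), Real.sqrt_div (by positivity),
    ← add_div]
  gcongr

/-- Prediction-error part of Theorem `weight` (noiseless weighted Lasso). -/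
theorem weighted_lasso_prediction
    (n p : ℕ) (hn : 0 < n)
    (X : Matrix (Fin n) (Fin p) ℝ) (f0 : Fin n → ℝ)
    (w : Fin p → ℝ) (hw : ∀ j, 0 ≤ w j)
    (lamInit lamWeight : ℝ) (hlamInit : 0 < lamInit) (hlamWeight : 0 < lamWeight)
    (S : Finset (Fin p)) (hS : S.Nonempty)
    (L M : ℝ) (hL : 0 < L) (hM : 0 < M)
    (hwmin : ∀ j ∉ S, M / L ≤ w j)
    (hwS : Real.sqrt (∑ j ∈ S, (w j) ^ 2) ≤ M * Real.sqrt (S.card))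
    (φ : ℝ) (hφ : 0 < φ)
    (hRE : ∀ γ : Fin p → ℝ,
      (∑ j ∈ Sᶜ, |γ j|) ≤ 2 * L * Real.sqrt (S.card) * Real.sqrt (∑ j ∈ S, (γ j) ^ 2) →
      φ * Real.sqrt (∑ j ∈ S, (γ j) ^ 2) ≤ Real.sqrt ((∑ i, (X.mulVec γ i) ^ 2) / n))
    (βw : Fin p → ℝ)
    (hβw : ∀ β : Fin p → ℝ,
      (∑ i, (X.mulVec βw i - f0 i) ^ 2) / n + lamInit * lamWeight * ∑ j, w j * |βw j|
        ≤ (∑ i, (X.mulVec β i - f0 i) ^ 2) / n + lamInit * lamWeight * ∑ j, w j * |β j|)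
    (β : Fin p → ℝ) :
    (∑ i, (X.mulVec βw i - f0 i) ^ 2) / n
      ≤ 2 * ((∑ i, (X.mulVec (fun j => if j ∈ S then β j else 0) i - f0 i) ^ 2) / n)
        + 6 * lamInit ^ 2 * lamWeight ^ 2 * M ^ 2 * S.card / φ ^ 2 := by
  set lam := lamInit * lamWeight with hlamdef
  have hlam : 0 < lam := mul_pos hlamInit hlamWeight
  set βS : Fin p → ℝ := fun j => if j ∈ S then β j else 0 with hβSdef
  set γ : Fin p → ℝ := fun j => βw j - βS j with hγdef
  set Qw : ℝ := (∑ i, (X.mulVec βw i - f0 i) ^ 2) / n with hQwdef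
  set QS : ℝ := (∑ i, (X.mulVec βS i - f0 i) ^ 2) / n with hQSdef
  have hQw0 : 0 ≤ Qw := by positivity
  have hQS0 : 0 ≤ QS := by positivity
  set nS : ℝ := Real.sqrt (∑ j ∈ S, (γ j) ^ 2) with hnSdef
  set n1 : ℝ := ∑ j ∈ Sᶜ, |γ j| with hn1def
  have hnS0 : 0 ≤ nS := Real.sqrt_nonneg _
  have hn10 : 0 ≤ n1 := Finset.sum_nonneg fun j _ => abs_nonneg _
  set rs : ℝ := Real.sqrt (S.card) with hrsdef
  have hrs0 : 0 ≤ rs := Real.sqrt_nonneg _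
  have hrssq : rs ^ 2 = (S.card : ℝ) := Real.sq_sqrt (Nat.cast_nonneg _)
  -- basic inequality
  have hkey := hβw βS
  -- sums over univ split into S and Sᶜ
  have hsplit : ∀ v : Fin p → ℝ, (∑ j, w j * |v j|)
      = (∑ j ∈ S, w j * |v j|) + ∑ j ∈ Sᶜ, w j * |v j| :=
    fun v => (Finset.sum_add_sum_compl S _).symm
  have hβSsum : (∑ j, w j * |βS j|) = ∑ j ∈ S, w j * |β j| := by
    rw [hsplit βS]
    have h1 : (∑ j ∈ Sᶜ, w j * |βS j|) = 0 := by
      refine Finset.sum_eq_zero fun j hj => ?_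
      have : βS j = 0 := by simp [hβSdef, (Finset.mem_compl.1 hj)]
      simp [this]
    have h2 : (∑ j ∈ S, w j * |βS j|) = ∑ j ∈ S, w j * |β j| := by
      refine Finset.sum_congr rfl fun j hj => ?_
      simp [hβSdef, hj]
    rw [h1, h2, add_zero]
  -- lower bound off-support part
  have hoff : (M / L) * n1 ≤ ∑ j ∈ Sᶜ, w j * |βw j| := by
    rw [hn1def, Finset.mul_sum]
    refine Finset.sum_le_sum fun j hj => ?_
    have hjS : j ∉ S := Finset.mem_compl.1 hj
    have hγj : γ j = βw j := by simp [hγdef, hβSdef, hjS]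
    rw [hγj]
    exact mul_le_mul_of_nonneg_right (hwmin j hjS) (abs_nonneg _)
  -- triangle on support terms
  have hsup : (∑ j ∈ S, w j * |β j|) ≤ (∑ j ∈ S, w j * |βw j|) + ∑ j ∈ S, w j * |γ j| := by
    rw [← Finset.sum_add_distrib]
    refine Finset.sum_le_sum fun j hj => ?_
    have hβj : β j = βw j - γ j := by simp [hγdef, hβSdef, hj]
    have : |β j| ≤ |βw j| + |γ j| := by rw [hβj]; exact abs_sub _ _
    calc w j * |β j| ≤ w j * (|βw j| + |γ j|) :=
          mul_le_mul_of_nonneg_left this (hw j)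
      _ = w j * |βw j| + w j * |γ j| := by ring
  -- Cauchy–Schwarz on support
  have hCS : (∑ j ∈ S, w j * |γ j|) ≤ M * rs * nS := by
    have h1 : (∑ j ∈ S, w j * |γ j|) ^ 2 ≤ (∑ j ∈ S, (w j)^2) * ∑ j ∈ S, (γ j)^2 := by
      have := Finset.sum_mul_sq_le_sq_mul_sq S (fun j => w j) (fun j => |γ j|)
      simpa [sq_abs] using this
    have h0 : 0 ≤ ∑ j ∈ S, w j * |γ j| :=
      Finset.sum_nonneg fun j _ => mul_nonneg (hw j) (abs_nonneg _)
    have h2 : (∑ j ∈ S, w j * |γ j|) ≤ Real.sqrt (∑ j ∈ S, (w j)^2) * nS := by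
      rw [hnSdef, ← Real.sqrt_mul (Finset.sum_nonneg fun j _ => sq_nonneg _)]
      exact (Real.le_sqrt h0 (by positivity)).2 h1
    refine h2.trans ?_
    exact mul_le_mul_of_nonneg_right hwS hnS0
  -- main inequality (A)
  have hA : Qw + lam * ((M / L) * n1) ≤ QS + lam * (M * rs * nS) := by
    have e1 : Qw + lam * ∑ j, w j * |βw j| ≤ QS + lam * ∑ j ∈ S, w j * |β j| := by
      rw [← hβSsum]; exact hkey
    rw [hsplit βw] at e1
    have o1 := mul_le_mul_of_nonneg_left hoff hlam.le
    have o2 := mul_le_mul_of_nonneg_left hsup hlam.le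
    have o3 := mul_le_mul_of_nonneg_left hCS hlam.le
    rw [mul_add] at e1 o2
    linarith
  have hgoalnn : (0:ℝ) ≤ 6 * lamInit ^ 2 * lamWeight ^ 2 * M ^ 2 * S.card / φ ^ 2 := by positivity
  show Qw ≤ 2 * QS + 6 * lamInit ^ 2 * lamWeight ^ 2 * M ^ 2 * S.card / φ ^ 2
  by_cases hcase : lam * (M * rs * nS) ≤ QS
  · have h0 : 0 ≤ lam * ((M / L) * n1) :=
      mul_nonneg hlam.le (mul_nonneg (div_nonneg hM.le hL.le) hn10)
    linarith
  · push_neg at hcase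
    -- the cone condition holds
    have hcone : n1 ≤ 2 * L * rs * nS := by
      have hn1nn0 : 0 ≤ Qw := hQw0
      have h1 : lam * ((M / L) * n1) ≤ 2 * (lam * (M * rs * nS)) := by
        linarith only [hA, hcase, hn1nn0]
      have h2 : lam * (M / L) * n1 ≤ lam * (M / L) * (2 * L * rs * nS) := by
        calc lam * (M / L) * n1 = lam * ((M / L) * n1) := by ring
          _ ≤ 2 * (lam * (M * rs * nS)) := h1
          _ = lam * (M / L) * (2 * L * rs * nS) := by field_simp
      exact le_of_mul_le_mul_left h2 (by positivity)
    have hre := hRE γ (by rw [← hrsdef, ← hnSdef, ← hn1def] at *; exact hcone)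
    rw [← hnSdef] at hre
    -- triangle inequality
    have htri : Real.sqrt ((∑ i, (X.mulVec γ i) ^ 2) / n)
        ≤ Real.sqrt Qw + Real.sqrt QS := by
      have hXγ : ∀ i, X.mulVec γ i = (X.mulVec βw i - f0 i) - (X.mulVec βS i - f0 i) := by
        intro i
        have : X.mulVec γ i = X.mulVec βw i - X.mulVec βS i := by
          simp only [hγdef, Matrix.mulVec, dotProduct]
          rw [← Finset.sum_sub_distrib]
          exact Finset.sum_congr rfl fun j _ => by ring
        rw [this]; ring
      have := sqrt_sum_sub_le n (fun i => X.mulVec βw i - f0 i) (fun i => X.mulVec βS i - f0 i)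
      rw [hQwdef, hQSdef]
      refine le_trans (le_of_eq ?_) this
      congr 1
      rw [Finset.sum_congr rfl fun i _ => by rw [hXγ i]]
    set a := Real.sqrt Qw with hadef
    set b := Real.sqrt QS with hbdef
    have ha2 : a ^ 2 = Qw := Real.sq_sqrt hQw0
    have hb2 : b ^ 2 = QS := Real.sq_sqrt hQS0
    have ha0 : 0 ≤ a := Real.sqrt_nonneg _
    have hb0 : 0 ≤ b := Real.sqrt_nonneg _
    -- φ * nS ≤ a + b
    have hφnS : φ * nS ≤ a + b := hre.trans htri
    -- Qw ≤ 2 lam M rs nS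
    have hn1nn : 0 ≤ lam * ((M / L) * n1) :=
      mul_nonneg hlam.le (mul_nonneg (div_nonneg hM.le hL.le) hn10)
    have hQwT : Qw ≤ 2 * (lam * (M * rs * nS)) := by linarith only [hA, hcase, hn1nn]
    set c := lam * M * rs / φ with hcdef
    have hc0 : 0 ≤ c := by positivity
    have hc2 : 6 * lamInit ^ 2 * lamWeight ^ 2 * M ^ 2 * S.card / φ ^ 2 = 6 * c ^ 2 := by
      have hcc : c ^ 2 = lamInit ^ 2 * lamWeight ^ 2 * M ^ 2 * rs ^ 2 / φ ^ 2 := by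
        rw [hcdef, hlamdef]; field_simp
      rw [hcc, hrssq]; ring
    rw [hc2]
    have h3 : a ^ 2 ≤ 2 * c * (a + b) := by
      have hmul : 2 * lam * M * rs * nS ≤ 2 * c * (a + b) := by
        have := mul_le_mul_of_nonneg_left hφnS (show (0:ℝ) ≤ 2 * lam * M * rs / φ by positivity)
        calc 2 * lam * M * rs * nS = (2 * lam * M * rs / φ) * (φ * nS) := by field_simp
          _ ≤ (2 * lam * M * rs / φ) * (a + b) := this
          _ = 2 * c * (a + b) := by rw [hcdef]; ring
      linarith only [hQwT, ha2, hmul]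
    rw [← ha2, ← hb2]
    linarith only [h3, sq_nonneg (a - 2 * c), sq_nonneg (b - c)]
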